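/- Fix reals z1, z2 with z2 < 0 < z1, nonnegative reals g11, g22, g12, and bulk concentrations c̄1, c̄2 > 0 with D(c̄1, c̄2) < 0. Then there exist ε > 0 and continuously differentiable functions c1, c2, E : (−ε, ε) → ℝ with c1(x) > 0 and c2(x) > 0 for all x, such that E(0) = 0, D(c1(0), c2(0)) = 0, c1′(0) ≠ 0, and for all x ∈ (−ε, ε): E′(x) = −(z1·(c1(x) − c̄1) + z2·(c2(x) − c̄2)), c2(x)·D(c1(x), c2(x))·c1′(x) = −(z1·(1 + g22·c2(x)) − z2·g12·c2(x))·E(x), and c1(x)·D(c1(x), c2(x))·c2′(x) = −(z2·(1 + g11·c1(x)) − z1·g12·c1(x))·E(x). -/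

import Mathlib

/-- The determinant of the Hessian of the entropy-plus-steric energy density. -/
noncomputable def D (g11 g22 g12 c1 c2 : ℝ) : ℝ :=
  (1 / c1 + g11) * (1 / c2 + g22) - g12 ^ 2

section Aux

open Set Filter Topology

/-- C¹ on an open set from pointwise derivatives with continuous derivative. -/
lemma contDiffOn_one_of_hasDerivAt {f f' : ℝ → ℝ} {S : Set ℝ} (ho : IsOpen S)
    (hd : ∀ x ∈ S, HasDerivAt f (f' x) x) (hc : ContinuousOn f' S) :
    ContDiffOn ℝ 1 f S := by
  rw [show (1 : WithTop ℕ∞) = 0 + 1 from rfl, contDiffOn_succ_iff_derivWithin ho.uniqueDiffOn]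
  refine ⟨fun x hx => ((hd x hx).differentiableAt.differentiableWithinAt), by simp, ?_⟩
  rw [contDiffOn_zero]
  refine hc.congr fun x hx => ?_
  rw [derivWithin_of_isOpen ho hx, (hd x hx).deriv]

/-- Global inverse of a function with derivative bounded below by a positive constant. -/
lemma exists_global_inverse (f f' : ℝ → ℝ) (c : ℝ) (hc : 0 < c)
    (hd : ∀ x, HasDerivAt f (f' x) x) (hlb : ∀ x, c ≤ f' x) :
    ∃ g : ℝ → ℝ, Continuous g ∧ (∀ y, f (g y) = y) ∧ (∀ x, g (f x) = x) ∧
      (∀ y, HasDerivAt g ((f' (g y))⁻¹) y) := by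
  have hderiv : ∀ x, deriv f x = f' x := fun x => (hd x).deriv
  have hmono : StrictMono f := by
    apply strictMono_of_deriv_pos
    intro x; rw [hderiv x]; exact lt_of_lt_of_le hc (hlb x)
  -- linear lower/upper bounds
  have hkey : ∀ x : ℝ, (0 ≤ x → f 0 + c * x ≤ f x) ∧ (x ≤ 0 → f x ≤ f 0 + c * x) := by
    have hdh : ∀ x, HasDerivAt (fun x => f x - c * x) (f' x - c) x := by
      intro x
      exact ((hd x).sub ((hasDerivAt_id x).const_mul c)).congr_deriv (by simp)
    have hmonoh : Monotone fun x => f x - c * x := by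
      apply monotone_of_deriv_nonneg
      · exact fun x => (hdh x).differentiableAt
      · intro x; rw [(hdh x).deriv]; linarith [hlb x]
    intro x
    constructor
    · intro hx
      have := hmonoh hx
      simp only [mul_zero, sub_zero] at this
      linarith
    · intro hx
      have := hmonoh hx
      simp only [mul_zero, sub_zero] at this
      linarith
  have hcf : Continuous f := by
    rw [continuous_iff_continuousAt]; exact fun x => (hd x).continuousAt
  have hsurj : Function.Surjective f := by
    apply hcf.surjective
    · apply tendsto_atTop_mono' _ _ (by simpa using (tendsto_atTop_add_const_left atTop (f 0)
        ((tendsto_const_mul_atTop_of_pos hc).mpr tendsto_id)))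
      filter_upwards [eventually_ge_atTop (0:ℝ)] with x hx
      exact (hkey x).1 hx
    · apply tendsto_atBot_mono' _ _ (by simpa using (tendsto_atBot_add_const_left atBot (f 0)
        ((tendsto_const_mul_atBot_of_pos hc).mpr tendsto_id)))
      filter_upwards [eventually_le_atBot (0:ℝ)] with x hx
      exact (hkey x).2 hx
  set e := StrictMono.orderIsoOfSurjective f hmono hsurj with he
  refine ⟨fun y => e.symm y, ?_, ?_, ?_, ?_⟩
  · exact e.symm.continuous
  · intro y
    have := e.apply_symm_apply y
    rwa [show (e : ℝ → ℝ) = f from StrictMono.coe_orderIsoOfSurjective f hmono hsurj] at this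
  · intro x
    exact StrictMono.orderIsoOfSurjective_symm_apply_self f hmono hsurj x
  · intro y
    have hfg : ∀ᶠ y' in 𝓝 y, f (e.symm y') = y' := by
      filter_upwards with y'
      have := e.apply_symm_apply y'
      rwa [show (e : ℝ → ℝ) = f from StrictMono.coe_orderIsoOfSurjective f hmono hsurj] at this
    exact HasDerivAt.of_local_left_inverse (e.symm.continuous.continuousAt)
      (hd (e.symm y)) (ne_of_gt (lt_of_lt_of_le hc (hlb _))) hfg




private lemma arith_L1 (z1 z2 g12 g11 a : ℝ) (hz1 : 0 < z1) (hz2 : z2 < 0)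
    (hg12 : 0 ≤ g12) (hg11 : 0 ≤ g11) (ha : 0 < a) :
    z1*g12*a ≤ (z1*g12*a - z2*(1+g11*a))*(1+g11*a) := by
  have h1g : (0:ℝ) < 1 + g11*a := by nlinarith
  have hzz : (0:ℝ) ≤ -z2 := by linarith
  nlinarith [mul_nonneg (mul_nonneg (mul_nonneg hz1.le hg12) ha.le) (mul_nonneg hg11 ha.le),
    mul_nonneg hzz h1g.le, mul_nonneg (mul_nonneg hzz h1g.le) (mul_nonneg hg11 ha.le)]

private lemma arith_RHS (z1 z2 g22 g12 b Bb : ℝ) (hz1 : 0 < z1) (hz2 : z2 < 0)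
    (hg22 : 0 ≤ g22) (hg12 : 0 ≤ g12) (hb : 0 < b) (hbB : b ≤ Bb) :
    (z1*(1+g22*b) - z2*g12*b)*(1+g22*b) ≤ (z1*(1+g22*Bb) + (-z2)*g12*Bb)*(1+g22*Bb) := by
  have hzz : (0:ℝ) ≤ -z2 := by linarith
  have e1 : z1*(1+g22*b) - z2*g12*b ≤ z1*(1+g22*Bb) + (-z2)*g12*Bb := by
    nlinarith [mul_nonneg hz1.le hg22, mul_nonneg hzz hg12]
  have e2 : 1+g22*b ≤ 1+g22*Bb := by nlinarith
  have p1 : 0 < 1+g22*b := by nlinarith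
  have p2 : 0 < z1*(1+g22*b) - z2*g12*b := by
    nlinarith [mul_nonneg (mul_nonneg hzz hg12) hb.le]
  nlinarith

private lemma arith_Ra (z1 z2 a b Bb cbar1 cbar2 : ℝ) (hz1 : 0 < z1) (hz2 : z2 < 0)
    (h5 : (-z2)*(Bb+cbar2) ≤ (a - cbar1 - 1)*z1) (h6 : z2*Bb ≤ z2*b)
    (hcbar2 : 0 < cbar2) :
    0 < z1*(a - cbar1) + z2*(b - cbar2) := by nlinarith

set_option maxHeartbeats 1000000 in
lemma exists_good_point (z1 z2 g11 g22 g12 cbar1 cbar2 : ℝ)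
    (hz2 : z2 < 0) (hz1 : 0 < z1)
    (hg11 : 0 ≤ g11) (hg22 : 0 ≤ g22) (hg12 : 0 ≤ g12)
    (hcbar1 : 0 < cbar1) (hcbar2 : 0 < cbar2)
    (hD : (1 / cbar1 + g11) * (1 / cbar2 + g22) - g12 ^ 2 < 0) :
    ∃ a b : ℝ, 0 < a ∧ 0 < b ∧ (1/a + g11) * (1/b + g22) = g12^2 ∧
      0 < z1*(a - cbar1) + z2*(b - cbar2) ∧
      0 < z1*(1+g22*b) - z2*g12*b ∧
      z2*(1+g11*a) - z1*g12*a < 0 ∧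
      0 < -(z2*(1+g11*a) - z1*g12*a)*(1+g11*a) - (z1*(1+g22*b) - z2*g12*b)*(1+g22*b) := by
  have hc1i : 0 < 1/cbar1 + g11 := by positivity
  have hc2i : 0 < 1/cbar2 + g22 := by positivity
  have hg12p : 0 < g12 := by nlinarith
  have hP : 0 < g12^2 - g11*g22 := by
    have h1 : 0 < 1/cbar1 := by positivity
    have h2 : 0 < 1/cbar2 := by positivity
    nlinarith [mul_nonneg (le_of_lt h1) hg22, mul_nonneg hg11 (le_of_lt h2),
      mul_pos h1 h2]
  obtain ⟨P, hPdef⟩ : ∃ P : ℝ, P = g12^2 - g11*g22 := ⟨_, rfl⟩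
  rw [← hPdef] at hP
  obtain ⟨Bb, hBbdef⟩ : ∃ Bb : ℝ, Bb = 2*(1+g11)/P := ⟨_, rfl⟩
  have hBb : 0 < Bb := by rw [hBbdef]; exact div_pos (by linarith) hP
  obtain ⟨M, hMdef⟩ : ∃ M : ℝ, M = (z1*(1+g22*Bb) + (-z2)*g12*Bb)*(1+g22*Bb) := ⟨_, rfl⟩
  have hgB : 0 ≤ g22*Bb := mul_nonneg hg22 hBb.le
  have hM : 0 < M := by
    rw [hMdef]
    have h1 : 0 < z1*(1+g22*Bb) := mul_pos hz1 (by linarith)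
    have h2 : 0 ≤ (-z2)*g12*Bb := mul_nonneg (mul_nonneg (by linarith) hg12) hBb.le
    nlinarith
  obtain ⟨a, hadef⟩ : ∃ a : ℝ,
      a = 1 + (1+g22)/P + 2*g22/P + cbar1 + (-z2)*(Bb+cbar2)/z1 + M/(z1*g12) := ⟨_, rfl⟩
  have ht1 : 0 ≤ (1+g22)/P := div_nonneg (by linarith) hP.le
  have ht2 : 0 ≤ 2*g22/P := div_nonneg (by linarith) hP.le
  have ht3 : 0 ≤ (-z2)*(Bb+cbar2)/z1 :=
    div_nonneg (mul_nonneg (by linarith) (by linarith)) hz1.le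
  have ht4 : 0 ≤ M/(z1*g12) := div_nonneg hM.le (mul_nonneg hz1.le hg12)
  have ha : 0 < a := by rw [hadef]; linarith
  have ha1 : 1 ≤ a := by rw [hadef]; linarith
  have haP1 : (1+g22)/P ≤ a := by rw [hadef]; linarith
  have haP2 : 2*g22/P ≤ a := by rw [hadef]; linarith
  have haR : cbar1 + (-z2)*(Bb+cbar2)/z1 + 1 ≤ a := by rw [hadef]; linarith
  have haM : M/(z1*g12) + 1 ≤ a := by rw [hadef]; linarith
  have hden : 1 ≤ P*a - g22 := by
    rw [div_le_iff₀ hP] at haP1; nlinarith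
  have hdenpos : 0 < P*a - g22 := by linarith
  obtain ⟨b, hbdef⟩ : ∃ b : ℝ, b = (1+g11*a)/(P*a - g22) := ⟨_, rfl⟩
  have h1g11a : 0 < 1 + g11*a := by nlinarith
  have hb : 0 < b := by rw [hbdef]; exact div_pos h1g11a hdenpos
  have hPa2 : 2*g22 ≤ P*a := by rw [div_le_iff₀ hP] at haP2; nlinarith
  have hbB : b ≤ Bb := by
    rw [hbdef, hBbdef, div_le_div_iff₀ hdenpos hP]
    have h2 : g22 ≤ P*a/2 := by linarith
    nlinarith [mul_pos hP ha]
  have hb' : 1 + g11*a = b*(P*a - g22) := by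
    rw [hbdef, div_mul_cancel₀ _ hdenpos.ne']
  have hpoly : (1+g11*a)*(1+g22*b) = g12^2*(a*b) := by
    rw [hPdef] at hb'
    linear_combination (1 + g22*b)*hb' - g22*b*hb'
  have hDab : (1/a + g11) * (1/b + g22) = g12^2 := by
    field_simp
    linear_combination hpoly
  -- positivity of K2b, negativity of K3a
  have hK2b : 0 < z1*(1+g22*b) - z2*g12*b := by
    have h1 : 0 < z1*(1+g22*b) := mul_pos hz1 (by nlinarith)
    nlinarith [mul_nonneg (mul_nonneg (by linarith : (0:ℝ) ≤ -z2) hg12) hb.le]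
  have hK3a : z2*(1+g11*a) - z1*g12*a < 0 := by
    have h1 : z2*(1+g11*a) < 0 := mul_neg_of_neg_of_pos hz2 h1g11a
    nlinarith [mul_pos (mul_pos hz1 hg12p) ha]
  -- R(a,b) > 0
  have hRa : 0 < z1*(a - cbar1) + z2*(b - cbar2) := by
    have h5 : (-z2)*(Bb+cbar2) ≤ (a - cbar1 - 1)*z1 := by
      have h5a : (-z2)*(Bb+cbar2)/z1 ≤ a - cbar1 - 1 := by linarith
      exact (div_le_iff₀ hz1).mp h5a
    have h6 : z2*Bb ≤ z2*b := mul_le_mul_of_nonpos_left hbB hz2.le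
    exact arith_Ra z1 z2 a b Bb cbar1 cbar2 hz1 hz2 h5 h6 hcbar2
  -- transversality
  have htrans : 0 < -(z2*(1+g11*a) - z1*g12*a)*(1+g11*a) - (z1*(1+g22*b) - z2*g12*b)*(1+g22*b) := by
    have hL1 := arith_L1 z1 z2 g12 g11 a hz1 hz2 hg12 hg11 ha
    have hRHS : (z1*(1+g22*b) - z2*g12*b)*(1+g22*b) ≤ M := by
      rw [hMdef]; exact arith_RHS z1 z2 g22 g12 b Bb hz1 hz2 hg22 hg12 hb hbB
    have hMa : M + z1*g12 ≤ z1*g12*a := by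
      have hzg : 0 < z1*g12 := mul_pos hz1 hg12p
      have h7 : M/(z1*g12) ≤ a - 1 := by linarith
      have h8 := (div_le_iff₀ hzg).mp h7
      nlinarith
    nlinarith [hL1, hRHS, hMa]
  exact ⟨a, b, ha, hb, hDab, hRa, hK2b, hK3a, htrans⟩

set_option maxHeartbeats 1000000 in
lemma exists_psi (z1 z2 g11 g22 g12 a b : ℝ) (hz1 : 0 < z1) (ha : 0 < a) (hb : 0 < b)
    (hk : 0 ≤ z1*g22 - z2*g12) :
    ∃ ψ : ℝ → ℝ, ψ a = b ∧ (∀ u, 0 < ψ u) ∧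
      (∀ u, 0 < z1 + (z1*g22 - z2*g12) * ψ u) ∧
      (∀ u, 0 < u → ContinuousAt ψ u) ∧
      (∀ u, 0 < u → HasDerivAt ψ
        (ψ u * (z2*(1+g11*u) - z1*g12*u) / (u * (z1 + (z1*g22 - z2*g12) * ψ u))) u) := by
  obtain ⟨k, hkdef⟩ : ∃ k : ℝ, k = z1*g22 - z2*g12 := ⟨_, rfl⟩
  rw [← hkdef] at hk
  obtain ⟨lam, hlamdef⟩ : ∃ lam : ℝ, lam = z2*g11 - z1*g12 := ⟨_, rfl⟩
  have hBhd : ∀ w, HasDerivAt (fun w => z1*w + k*Real.exp w) (z1 + k*Real.exp w) w := by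
    intro w
    have h1 := (hasDerivAt_id w).const_mul z1
    have h2 := (Real.hasDerivAt_exp w).const_mul k
    exact (h1.add h2).congr_deriv (by simp)
  have hlb : ∀ w, z1 ≤ z1 + k*Real.exp w := by
    intro w; nlinarith [Real.exp_pos w, hk]
  obtain ⟨Bi, hBic, hBhBi, hBiBh, hBid⟩ :=
    exists_global_inverse (fun w => z1*w + k*Real.exp w) (fun w => z1 + k*Real.exp w)
      z1 hz1 hBhd hlb
  refine ⟨fun u => Real.exp (Bi (z2*Real.log u + lam*u - (z2*Real.log a + lam*a)
    + (z1*Real.log b + k*Real.exp (Real.log b)))), ?_, ?_, ?_, ?_, ?_⟩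
  · have : z2*Real.log a + lam*a - (z2*Real.log a + lam*a)
      + (z1*Real.log b + k*Real.exp (Real.log b))
      = z1*Real.log b + k*Real.exp (Real.log b) := by ring
    show Real.exp (Bi (z2*Real.log a + lam*a - (z2*Real.log a + lam*a)
      + (z1*Real.log b + k*Real.exp (Real.log b)))) = b
    rw [this, hBiBh (Real.log b), Real.exp_log hb]
  · intro u; exact Real.exp_pos _
  · intro u
    have := Real.exp_pos (Bi (z2*Real.log u + lam*u - (z2*Real.log a + lam*a)
      + (z1*Real.log b + k*Real.exp (Real.log b))))
    nlinarith [mul_nonneg hk this.le]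
  · intro u hu
    apply Real.continuous_exp.continuousAt.comp
    apply hBic.continuousAt.comp
    apply ContinuousAt.add (ContinuousAt.sub ?_ continuousAt_const) continuousAt_const
    exact ((Real.continuousAt_log (ne_of_gt hu)).const_smul z2).add
      ((continuousAt_id).const_smul lam) |>.congr (by
        filter_upwards with x; simp [smul_eq_mul])
  · intro u hu
    have hinner : HasDerivAt (fun u => z2*Real.log u + lam*u - (z2*Real.log a + lam*a)
        + (z1*Real.log b + k*Real.exp (Real.log b))) (z2/u + lam) u := by
      have h1 := (Real.hasDerivAt_log (ne_of_gt hu)).const_mul z2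
      have h2 := (hasDerivAt_id u).const_mul lam
      have h3 := (h1.add h2).sub_const (z2*Real.log a + lam*a)
      have h4 := h3.add_const (z1*Real.log b + k*Real.exp (Real.log b))
      refine h4.congr_deriv ?_
      simp [div_eq_mul_inv]
    have hBi' := hBid (z2*Real.log u + lam*u - (z2*Real.log a + lam*a)
      + (z1*Real.log b + k*Real.exp (Real.log b)))
    have hcomp := hBi'.comp u hinner
    have hexp := (Real.hasDerivAt_exp _).comp u hcomp
    refine hexp.congr_deriv ?_
    simp only [Function.comp_apply]
    have hK2pos : 0 < z1 + k*Real.exp (Bi (z2*Real.log u + lam*u - (z2*Real.log a + lam*a)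
        + (z1*Real.log b + k*Real.exp (Real.log b)))) := by
      nlinarith [mul_nonneg hk (Real.exp_pos (Bi (z2*Real.log u + lam*u - (z2*Real.log a + lam*a)
        + (z1*Real.log b + k*Real.exp (Real.log b))))).le]
    rw [hkdef] at hK2pos ⊢
    rw [hlamdef]
    field_simp
    ring


set_option maxHeartbeats 1000000 in
lemma main_analysis (z1 z2 g11 g22 g12 cbar1 cbar2 a b : ℝ) (ψ ψd : ℝ → ℝ)
    (hz2 : z2 < 0) (hz1 : 0 < z1)
    (hg11 : 0 ≤ g11) (hg22 : 0 ≤ g22) (hg12 : 0 ≤ g12)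
    (ha : 0 < a) (hb : 0 < b)
    (hψa : ψ a = b) (hψpos : ∀ u, 0 < ψ u)
    (hK2pos : ∀ u, 0 < z1 + (z1*g22 - z2*g12) * ψ u)
    (hψc : ∀ u, 0 < u → ContinuousAt ψ u)
    (hψdd : ∀ u, 0 < u → HasDerivAt ψ (ψd u) u)
    (hψddef : ψd = fun u =>
      ψ u * (z2*(1+g11*u) - z1*g12*u) / (u * (z1 + (z1*g22 - z2*g12) * ψ u)))
    (hDab : (1/a + g11) * (1/b + g22) = g12^2)
    (hRa : 0 < z1*(a - cbar1) + z2*(b - cbar2))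
    (htrans : 0 < -(z2*(1+g11*a) - z1*g12*a)*(1+g11*a) - (z1*(1+g22*b) - z2*g12*b)*(1+g22*b)) :
    ∃ ε : ℝ, 0 < ε ∧
    ∃ c1 c2 E : ℝ → ℝ,
      ContDiffOn ℝ 1 c1 (Set.Ioo (-ε) ε) ∧
      ContDiffOn ℝ 1 c2 (Set.Ioo (-ε) ε) ∧
      ContDiffOn ℝ 1 E (Set.Ioo (-ε) ε) ∧
      (∀ x ∈ Set.Ioo (-ε) ε, 0 < c1 x ∧ 0 < c2 x) ∧
      E 0 = 0 ∧
      D g11 g22 g12 (c1 0) (c2 0) = 0 ∧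
      deriv c1 0 ≠ 0 ∧
      ∀ x ∈ Set.Ioo (-ε) ε,
        deriv E x = -(z1 * (c1 x - cbar1) + z2 * (c2 x - cbar2)) ∧
        c2 x * D g11 g22 g12 (c1 x) (c2 x) * deriv c1 x =
          -(z1 * (1 + g22 * c2 x) - z2 * g12 * c2 x) * E x ∧
        c1 x * D g11 g22 g12 (c1 x) (c2 x) * deriv c2 x =
          -(z2 * (1 + g11 * c1 x) - z1 * g12 * c1 x) * E x := by
  -- basic abbreviations
  obtain ⟨dd, hdddef⟩ : ∃ dd : ℝ → ℝ, dd = fun u => D g11 g22 g12 u (ψ u) := ⟨_, rfl⟩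
  obtain ⟨K2, hK2def⟩ : ∃ K2 : ℝ → ℝ, K2 = fun u => z1 + (z1*g22 - z2*g12) * ψ u := ⟨_, rfl⟩
  obtain ⟨Rf, hRfdef⟩ : ∃ Rf : ℝ → ℝ, Rf = fun u => z1*(u - cbar1) + z2*(ψ u - cbar2) := ⟨_, rfl⟩
  obtain ⟨Gf, hGfdef⟩ : ∃ Gf : ℝ → ℝ, Gf = fun u => ψ u * dd u / K2 u := ⟨_, rfl⟩
  obtain ⟨dd', hdd'def⟩ : ∃ dd' : ℝ → ℝ, dd' = fun u =>
    -(u^2)⁻¹ * ((ψ u)⁻¹ + g22) + (u⁻¹ + g11) * (-(ψd u) / ψ u ^ 2) := ⟨_, rfl⟩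
  obtain ⟨Gd, hGddef⟩ : ∃ Gd : ℝ → ℝ, Gd = fun u =>
    ((ψd u * dd u + ψ u * dd' u) * K2 u - ψ u * dd u * ((z1*g22 - z2*g12) * ψd u))
      / (K2 u)^2 := ⟨_, rfl⟩
  have hK2c : ∀ u, 0 < u → ContinuousAt K2 u := by
    intro u hu; rw [hK2def]
    exact continuousAt_const.add (continuousAt_const.mul (hψc u hu))
  have hK2ne : ∀ u, K2 u ≠ 0 := by intro u; rw [hK2def]; exact (hK2pos u).ne'
  have hψdc : ∀ u, 0 < u → ContinuousAt ψd u := by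
    intro u hu; rw [hψddef]
    apply ContinuousAt.div
    · exact (hψc u hu).mul (by fun_prop)
    · exact continuousAt_id.mul (continuousAt_const.add (continuousAt_const.mul (hψc u hu)))
    · exact mul_ne_zero (ne_of_gt hu) (hK2pos u).ne'
  have hddc : ∀ u, 0 < u → ContinuousAt dd u := by
    intro u hu; rw [hdddef]
    show ContinuousAt (fun u => (1/u + g11) * (1/ψ u + g22) - g12^2) u
    apply ContinuousAt.sub _ continuousAt_const
    apply ContinuousAt.mul
    · exact ((continuousAt_const.div continuousAt_id (ne_of_gt hu)).add continuousAt_const)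
    · exact ((continuousAt_const.div (hψc u hu) (hψpos u).ne').add continuousAt_const)
  have hdd'c : ∀ u, 0 < u → ContinuousAt dd' u := by
    intro u hu; rw [hdd'def]
    apply ContinuousAt.add
    · apply ContinuousAt.mul
      · exact (continuousAt_id.pow 2).inv₀ (by simpa using pow_ne_zero 2 (ne_of_gt hu)) |>.neg
      · exact ((hψc u hu).inv₀ (hψpos u).ne').add continuousAt_const
    · apply ContinuousAt.mul
      · exact (continuousAt_id.inv₀ (ne_of_gt hu)).add continuousAt_const
      · exact ((hψdc u hu).neg).div ((hψc u hu).pow 2) (pow_ne_zero 2 (hψpos u).ne')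
  have hGfc : ∀ u, 0 < u → ContinuousAt Gf u := by
    intro u hu; rw [hGfdef]
    exact ((hψc u hu).mul (hddc u hu)).div (hK2c u hu) (hK2ne u)
  have hGdc : ∀ u, 0 < u → ContinuousAt Gd u := by
    intro u hu; rw [hGddef]
    apply ContinuousAt.div
    · apply ContinuousAt.sub
      · exact (((hψdc u hu).mul (hddc u hu)).add ((hψc u hu).mul (hdd'c u hu))).mul (hK2c u hu)
      · exact ((hψc u hu).mul (hddc u hu)).mul (continuousAt_const.mul (hψdc u hu))
    · exact (hK2c u hu).pow 2
    · exact pow_ne_zero 2 (hK2ne u)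
  have hRfc : ∀ u, 0 < u → ContinuousAt Rf u := by
    intro u hu; rw [hRfdef]
    exact (continuousAt_const.mul (continuousAt_id.sub continuousAt_const)).add
      (continuousAt_const.mul ((hψc u hu).sub continuousAt_const))
  -- derivatives
  have hddd : ∀ u, 0 < u → HasDerivAt dd (dd' u) u := by
    intro u hu; rw [hdddef, hdd'def]
    show HasDerivAt (fun u => (1/u + g11) * (1/ψ u + g22) - g12^2) _ u
    have h1 : HasDerivAt (fun u : ℝ => 1/u + g11) (-(u^2)⁻¹) u := by
      simpa [one_div] using (hasDerivAt_inv (ne_of_gt hu)).add_const g11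
    have h2 : HasDerivAt (fun u => 1/ψ u + g22) (-(ψd u) / ψ u ^ 2) u := by
      simpa [one_div] using ((hψdd u hu).inv (hψpos u).ne').add_const g22
    have := (h1.mul h2).sub_const (g12^2)
    refine this.congr_deriv ?_
    simp [one_div]
  have hGdd : ∀ u, 0 < u → HasDerivAt Gf (Gd u) u := by
    intro u hu; rw [hGfdef, hGddef]
    have hK2d : HasDerivAt K2 ((z1*g22 - z2*g12) * ψd u) u := by
      rw [hK2def]
      exact ((hψdd u hu).const_mul _).const_add z1
    exact (((hψdd u hu).mul (hddd u hu)).div hK2d (hK2ne u))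
  have hRfd : ∀ u, 0 < u → HasDerivAt Rf (z1 + z2 * ψd u) u := by
    intro u hu; rw [hRfdef]
    have h1 := ((hasDerivAt_id u).sub_const cbar1).const_mul z1
    have h2 := ((hψdd u hu).sub_const cbar2).const_mul z2
    exact (h1.add h2).congr_deriv (by simp)
  -- values at a
  have hdda : dd a = 0 := by
    rw [hdddef]; show D g11 g22 g12 a (ψ a) = 0
    rw [D, hψa]; linarith [hDab]
  have hGfa : Gf a = 0 := by rw [hGfdef]; simp [hdda]
  have hK2a : (0:ℝ) < z1 + (z1*g22 - z2*g12)*b := by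
    have := hK2pos a; rwa [hψa] at this
  have hdd'a : dd' a = (-(z2*(1+g11*a) - z1*g12*a)*(1+g11*a)
      - (z1*(1+g22*b) - z2*g12*b)*(1+g22*b))/(a^2*b*(z1 + (z1*g22 - z2*g12)*b)) := by
    rw [hdd'def]
    show -(a^2)⁻¹ * ((ψ a)⁻¹ + g22) + (a⁻¹ + g11) * (-(ψd a) / ψ a ^ 2) = _
    rw [hψddef]
    show -(a^2)⁻¹ * ((ψ a)⁻¹ + g22) + (a⁻¹ + g11) *
      (-(ψ a * (z2*(1+g11*a) - z1*g12*a) / (a * (z1 + (z1*g22 - z2*g12) * ψ a))) / ψ a ^ 2) = _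
    rw [hψa]
    have hK2e : z1 + b * (g22 * z1 - z2 * g12) ≠ 0 := by linarith [hK2a]
    field_simp
    ring
  have hdd'apos : 0 < dd' a := by
    rw [hdd'a]
    exact div_pos htrans (by positivity)
  have hGda : Gd a = b * dd' a / (z1 + (z1*g22 - z2*g12)*b) := by
    rw [hGddef]
    show ((ψd a * dd a + ψ a * dd' a) * K2 a - ψ a * dd a * ((z1*g22 - z2*g12) * ψd a))
      / (K2 a)^2 = _
    rw [hdda, hK2def]
    show ((ψd a * 0 + ψ a * dd' a) * (z1 + (z1*g22 - z2*g12) * ψ a) - ψ a * 0 *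
      ((z1*g22 - z2*g12) * ψd a)) / (z1 + (z1*g22 - z2*g12) * ψ a)^2 = _
    rw [hψa]
    have hK2e : z1 + b * (z1 * g22 - z2 * g12) ≠ 0 := by linarith [hK2a]
    field_simp
    ring
  have hGdapos : 0 < Gd a := by
    rw [hGda]; exact div_pos (mul_pos hb hdd'apos) hK2a
  -- clamp and Q
  obtain ⟨cl, hcldef⟩ : ∃ cl : ℝ → ℝ, cl = fun t => max (3*a/4) (min (5*a/4) t) := ⟨_, rfl⟩
  have hclcont : Continuous cl := by
    rw [hcldef]; exact continuous_const.max (continuous_const.min continuous_id)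
  have hclpos : ∀ t, 0 < cl t := by
    intro t; rw [hcldef]
    exact lt_of_lt_of_le (by linarith) (le_max_left _ _)
  have hcleq : ∀ u, 3*a/4 ≤ u → u ≤ 5*a/4 → cl u = u := by
    intro u h1 h2; rw [hcldef]
    show max (3*a/4) (min (5*a/4) u) = u
    rw [min_eq_right h2, max_eq_right h1]
  obtain ⟨Qf, hQfdef⟩ : ∃ Qf : ℝ → ℝ, Qf = fun u => ∫ t in a..u, Rf (cl t) * Gf (cl t) :=
    ⟨_, rfl⟩
  have hQic : Continuous (fun t => Rf (cl t) * Gf (cl t)) := by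
    rw [continuous_iff_continuousAt]; intro t
    exact ((hRfc _ (hclpos t)).comp hclcont.continuousAt).mul
      ((hGfc _ (hclpos t)).comp hclcont.continuousAt)
  have hQd : ∀ u, 3*a/4 ≤ u → u ≤ 5*a/4 → HasDerivAt Qf (Rf u * Gf u) u := by
    intro u h1 h2
    have := (hQic.integral_hasStrictDerivAt a u).hasDerivAt
    rw [hcleq u h1 h2] at this
    rw [hQfdef]; exact this
  have hQcont : Continuous Qf := by
    rw [continuous_iff_continuousAt]; intro x
    rw [hQfdef]
    exact ((hQic.integral_hasStrictDerivAt a x).hasDerivAt).continuousAt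
  have hQa : Qf a = 0 := by rw [hQfdef]; exact intervalIntegral.integral_same
  -- L'Hopital
  have hGsq : ∀ u, 3*a/4 ≤ u → u ≤ 5*a/4 → HasDerivAt (fun u => (Gf u)^2) (2*Gf u*Gd u) u := by
    intro u h1 h2
    have hu : 0 < u := by linarith
    exact ((hGdd u hu).pow 2).congr_deriv (by simp [mul_comm, mul_assoc, mul_left_comm])
  have hIoo : Ioo (3*a/4) (5*a/4) ∈ 𝓝 a := Ioo_mem_nhds (by linarith) (by linarith)
  have hGne' : ∀ᶠ u in 𝓝[≠] a, Gf u ≠ 0 := by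
    have := (hGdd a ha).eventually_ne (c := Gf a) hGdapos.ne'
    rw [hGfa] at this; exact this
  have hGdne : ∀ᶠ u in 𝓝 a, Gd u ≠ 0 := (hGdc a ha).eventually_ne hGdapos.ne'
  have htend : Tendsto (fun u => Qf u / (Gf u)^2) (𝓝[≠] a) (𝓝 (Rf a / (2 * Gd a))) := by
    apply HasDerivAt.lhopital_zero_nhdsNE (f' := fun u => Rf u * Gf u)
      (g' := fun u => 2*Gf u*Gd u)
    · filter_upwards [nhdsWithin_le_nhds hIoo] with u hu
      exact hQd u hu.1.le hu.2.le
    · filter_upwards [nhdsWithin_le_nhds hIoo] with u hu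
      exact hGsq u hu.1.le hu.2.le
    · filter_upwards [hGne', nhdsWithin_le_nhds hGdne] with u h1 h2
      exact mul_ne_zero (mul_ne_zero two_ne_zero h1) h2
    · have := (hQcont.tendsto a)
      rw [hQa] at this
      exact this.mono_left nhdsWithin_le_nhds
    · have := (show ContinuousAt (fun u => Gf u ^ 2) a from (hGfc a ha).pow 2)
      have h0 : (Gf a)^2 = 0 := by rw [hGfa]; ring
      have := this.tendsto
      rw [h0] at this
      exact this.mono_left nhdsWithin_le_nhds
    · apply Tendsto.congr' (f₁ := fun u => Rf u / (2 * Gd u))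
      · filter_upwards [hGne'] with u h1
        rw [show (2:ℝ)*Gf u*Gd u = Gf u*(2*Gd u) by ring,
          show Rf u * Gf u = Gf u * Rf u from mul_comm _ _,
          mul_div_mul_left _ _ h1]
      · have : ContinuousAt (fun u => Rf u / (2 * Gd u)) a :=
          (hRfc a ha).div (continuousAt_const.mul (hGdc a ha))
            (by simpa using hGdapos.ne')
        exact this.tendsto.mono_left nhdsWithin_le_nhds
  -- rho
  have hRfa : 0 < Rf a := by
    rw [hRfdef]
    show 0 < z1*(a - cbar1) + z2*(ψ a - cbar2)
    rw [hψa]; exact hRa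
  obtain ⟨ρ, hρdef⟩ : ∃ ρ : ℝ → ℝ,
      ρ = fun u => if u = a then Rf a/(2*Gd a) else Qf u/(Gf u)^2 := ⟨_, rfl⟩
  have hρa : ρ a = Rf a / (2*Gd a) := by rw [hρdef]; simp
  have hρapos : 0 < ρ a := by rw [hρa]; positivity
  have hρca : ContinuousAt ρ a := by
    have h1 : Tendsto ρ (𝓝[≠] a) (𝓝 (ρ a)) := by
      rw [hρa]
      apply htend.congr'
      filter_upwards [self_mem_nhdsWithin] with u hu
      simp only [hρdef]
      rw [if_neg (show ¬ u = a by simpa using hu)]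
    have h2 : Tendsto ρ (pure a) (𝓝 (ρ a)) := tendsto_pure_nhds ρ a
    have h3 : Tendsto ρ (𝓝[≠] a ⊔ pure a) (𝓝 (ρ a)) := tendsto_sup.mpr ⟨h1, h2⟩
    rwa [nhdsNE_sup_pure] at h3
  have hρgt : ∀ᶠ u in 𝓝 a, 0 < ρ u := hρca.eventually (eventually_gt_nhds hρapos)
  have hGne'' : ∀ᶠ u in 𝓝 a, u ≠ a → Gf u ≠ 0 := by
    have := eventually_nhdsWithin_iff.mp hGne'
    filter_upwards [this] with u hu hne
    exact hu hne
  obtain ⟨δ, hδpos, hδP⟩ : ∃ δ > 0, ∀ u, |u - a| < δ →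
      (u ∈ Ioo (3*a/4) (5*a/4) ∧ 0 < ρ u ∧ (u ≠ a → Gf u ≠ 0)) := by
    have Hbig : ∀ᶠ u in 𝓝 a, (u ∈ Ioo (3*a/4) (5*a/4) ∧ 0 < ρ u ∧ (u ≠ a → Gf u ≠ 0)) := by
      filter_upwards [hIoo, hρgt, hGne''] with u h1 h2 h3
      exact ⟨h1, h2, h3⟩
    have := Metric.eventually_nhds_iff.mp Hbig
    simpa [Real.dist_eq] using this
  have hρc : ∀ u, |u - a| < δ → ContinuousAt ρ u := by
    intro u hu
    by_cases hua : u = a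
    · rw [hua]; exact hρca
    · have hGfne := (hδP u hu).2.2 hua
      have hcq : ContinuousAt (fun u => Qf u/(Gf u)^2) u := by
        have hupos : 0 < u := by have := (hδP u hu).1.1; linarith
        exact (hQcont.continuousAt).div ((hGfc u hupos).pow 2) (pow_ne_zero 2 hGfne)
      apply hcq.congr
      filter_upwards [compl_singleton_mem_nhds hua] with v hv
      simp only [hρdef]
      rw [if_neg (show ¬ v = a by simpa using hv)]
  -- s
  obtain ⟨sf, hsfdef⟩ : ∃ sf : ℝ → ℝ, sf = fun u => Real.sqrt (2 * ρ u) := ⟨_, rfl⟩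
  have hsfpos : ∀ u, |u - a| < δ → 0 < sf u := by
    intro u hu; rw [hsfdef]
    exact Real.sqrt_pos.mpr (by linarith [(hδP u hu).2.1])
  have hsfc : ∀ u, |u - a| < δ → ContinuousAt sf u := by
    intro u hu; rw [hsfdef]
    exact (Real.continuous_sqrt.continuousAt).comp (continuousAt_const.mul (hρc u hu))
  have hsq : ∀ u, |u - a| < δ → sf u ^ 2 = 2 * ρ u := by
    intro u hu; rw [hsfdef]
    exact Real.sq_sqrt (by linarith [(hδP u hu).2.1])
  have hGS : ∀ u, |u - a| < δ → Gf u^2 * sf u^2 = 2 * Qf u := by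
    intro u hu
    by_cases hua : u = a
    · rw [hua, hGfa, hQa]; ring
    · rw [hsq u hu, hρdef]
      simp only [if_neg hua]
      have hGfne := (hδP u hu).2.2 hua
      field_simp
  -- W = G * s
  obtain ⟨Wf, hWfdef⟩ : ∃ Wf : ℝ → ℝ, Wf = fun u => Gf u * sf u := ⟨_, rfl⟩
  have hWfa : Wf a = 0 := by rw [hWfdef]; show Gf a * sf a = 0; rw [hGfa]; ring
  have hsfa2 : sf a ^ 2 * Gd a = Rf a := by
    have h1 := hsq a (by simpa using hδpos)
    rw [h1, hρa]
    field_simp [hGdapos.ne']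
  have hWd : ∀ u, |u - a| < δ → HasDerivAt Wf (Rf u / sf u) u := by
    intro u hu
    by_cases hua : u = a
    · subst hua
      rw [hasDerivAt_iff_tendsto_slope]
      have hslope : (fun v => slope Wf u v) =ᶠ[𝓝[≠] u] fun v => slope Gf u v * sf v := by
        filter_upwards [self_mem_nhdsWithin] with v hv
        simp only [slope_def_field, hWfa, hGfa]
        simp only [hWfdef]
        ring
      have h1 : Tendsto (fun v => slope Gf u v * sf v) (𝓝[≠] u) (𝓝 (Gd u * sf u)) := by
        apply Tendsto.mul
        · exact hasDerivAt_iff_tendsto_slope.mp (hGdd u ha)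
        · exact ((hsfc u (by simpa using hδpos)).tendsto).mono_left nhdsWithin_le_nhds
      have heq : Gd u * sf u = Rf u / sf u := by
        have hsne := (hsfpos u (by simpa using hδpos)).ne'
        rw [← hsfa2]
        field_simp
      rw [heq] at h1
      exact h1.congr' hslope.symm
    · -- away from a
      have hione := (hδP u hu).1
      have hupos : 0 < u := by have := hione.1; linarith
      have hGfne := (hδP u hu).2.2 hua
      have hρpos := (hδP u hu).2.1
      have hsfne := (hsfpos u hu).ne'
      -- derivative of rho at u
      have hρd : HasDerivAt ρ
          (((Rf u * Gf u) * (Gf u)^2 - Qf u * (2*Gf u*Gd u)) / ((Gf u)^2)^2) u := by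
        have hdiv : HasDerivAt (fun v => Qf v / Gf v ^ 2) _ u := (hQd u hione.1.le hione.2.le).div (hGsq u hione.1.le hione.2.le)
          (pow_ne_zero 2 hGfne)
        apply hdiv.congr_of_eventuallyEq
        filter_upwards [compl_singleton_mem_nhds hua] with v hv
        simp only [hρdef]
        rw [if_neg (show ¬ v = a by simpa using hv)]
      have hρu2 : 2 * ρ u ≠ 0 := by positivity
      have hsd : HasDerivAt sf
          (1/(2*Real.sqrt (2 * ρ u)) *
            (2 * (((Rf u * Gf u) * (Gf u)^2 - Qf u * (2*Gf u*Gd u)) / ((Gf u)^2)^2))) u := by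
        rw [hsfdef]
        exact (Real.hasDerivAt_sqrt hρu2).comp u (hρd.const_mul 2)
      have hW := (hGdd u hupos).mul hsd
      have hsfu : Real.sqrt (2 * ρ u) = sf u := by rw [hsfdef]
      rw [hsfu] at hsd hW
      have hQu : 2 * Qf u = Gf u ^2 * sf u ^2 := (hGS u hu).symm
      have key : Gd u * sf u + Gf u *
          (1/(2*sf u) * (2 * (((Rf u * Gf u) * (Gf u)^2 - Qf u * (2*Gf u*Gd u)) / ((Gf u)^2)^2)))
          = Rf u / sf u := by
        have hQu' : Qf u = Gf u ^2 * sf u ^2 / 2 := by linarith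
        rw [hQu']
        field_simp
        ring
      rw [hWfdef]
      rw [key] at hW
      exact hW
  -- inverse of arclength map
  obtain ⟨cl2, hcl2def⟩ : ∃ cl2 : ℝ → ℝ, cl2 = fun t => max (a - δ/2) (min (a + δ/2) t) :=
    ⟨_, rfl⟩
  have hcl2cont : Continuous cl2 := by
    rw [hcl2def]; exact continuous_const.max (continuous_const.min continuous_id)
  have hcl2mem : ∀ t, |cl2 t - a| ≤ δ/2 := by
    intro t; rw [hcl2def]
    show |max (a - δ/2) (min (a + δ/2) t) - a| ≤ δ/2
    rw [abs_le]
    constructor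
    · have := le_max_left (a - δ/2) (min (a + δ/2) t); linarith
    · have h1 : min (a + δ/2) t ≤ a + δ/2 := min_le_left _ _
      have h2 : a - δ/2 ≤ a + δ/2 := by linarith
      have := max_le h2 h1; linarith
  have hcl2lt : ∀ t, |cl2 t - a| < δ := fun t => lt_of_le_of_lt (hcl2mem t) (by linarith)
  have hcl2eq : ∀ u, |u - a| ≤ δ/2 → cl2 u = u := by
    intro u hu; rw [hcl2def]
    rw [abs_le] at hu
    show max (a - δ/2) (min (a + δ/2) u) = u
    rw [min_eq_right (by linarith), max_eq_right (by linarith)]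
  obtain ⟨sc, hscdef⟩ : ∃ sc : ℝ → ℝ, sc = fun t => sf (cl2 t) := ⟨_, rfl⟩
  have hscc : Continuous sc := by
    rw [continuous_iff_continuousAt]; intro t; rw [hscdef]
    exact (hsfc (cl2 t) (hcl2lt t)).comp hcl2cont.continuousAt
  have hscpos : ∀ t, 0 < sc t := by
    intro t; rw [hscdef]; exact hsfpos _ (hcl2lt t)
  have hcl2idem : ∀ t, cl2 (cl2 t) = cl2 t := fun t => hcl2eq _ (hcl2mem t)
  obtain ⟨mx, hmxpos, hmx⟩ : ∃ mx : ℝ, 0 < mx ∧ ∀ t, sc t ≤ mx := by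
    obtain ⟨x0, hx0K, hx0max⟩ := isCompact_Icc.exists_isMaxOn
      (nonempty_Icc.mpr (by linarith : a - δ/2 ≤ a + δ/2)) hscc.continuousOn
    refine ⟨sc x0, hscpos x0, fun t => ?_⟩
    have hmem : cl2 t ∈ Icc (a - δ/2) (a + δ/2) := by
      have := hcl2mem t; rw [abs_le] at this
      exact ⟨by linarith [this.1], by linarith [this.2]⟩
    have h1 := hx0max hmem
    have h2 : sc (cl2 t) = sc t := by rw [hscdef]; simp only [hcl2idem]
    simpa [h2] using h1
  obtain ⟨xm, hxmdef⟩ : ∃ xm : ℝ → ℝ, xm = fun u => ∫ t in a..u, (sc t)⁻¹ := ⟨_, rfl⟩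
  have hxd : ∀ u, HasDerivAt xm ((sc u)⁻¹) u := by
    intro u; rw [hxmdef]
    exact ((hscc.inv₀ (fun t => (hscpos t).ne')).integral_hasStrictDerivAt a u).hasDerivAt
  have hxlb : ∀ u, mx⁻¹ ≤ (sc u)⁻¹ := fun u => inv_anti₀ (hscpos u) (hmx u)
  obtain ⟨U, hUc, hxU, hUx, hUd⟩ := exists_global_inverse xm (fun u => (sc u)⁻¹)
    mx⁻¹ (inv_pos.mpr hmxpos) hxd hxlb
  have hxa : xm a = 0 := by rw [hxmdef]; exact intervalIntegral.integral_same
  have hU0 : U 0 = a := by rw [← hxa, hUx]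
  obtain ⟨ε, hεpos, hεP⟩ : ∃ ε > 0, ∀ x, |x - 0| < ε → |U x - a| < δ/2 := by
    have h1 : Tendsto U (𝓝 0) (𝓝 a) := by
      have := hUc.tendsto 0; rwa [hU0] at this
    have h2 : ∀ᶠ x in 𝓝 (0:ℝ), |U x - a| < δ/2 := by
      have : ∀ᶠ y in 𝓝 a, |y - a| < δ/2 := by
        have : Ioo (a - δ/2) (a + δ/2) ∈ 𝓝 a := Ioo_mem_nhds (by linarith) (by linarith)
        filter_upwards [this] with y hy
        rw [abs_lt]; exact ⟨by linarith [hy.1], by linarith [hy.2]⟩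
      exact h1.eventually this
    have := Metric.eventually_nhds_iff.mp h2
    simpa [Real.dist_eq] using this
  -- derivative of U on the strip
  have hUd' : ∀ x, |x - 0| < ε → HasDerivAt U (sf (U x)) x := by
    intro x hx
    have h1 := hUd x
    have h2 : sc (U x) = sf (U x) := by
      rw [hscdef]
      simp only [hcl2eq (U x) (hεP x hx).le]
    rw [inv_inv, h2] at h1
    exact h1
  have hstrip : ∀ x, x ∈ Ioo (-ε) ε → |x - 0| < ε := by
    intro x hx; rw [abs_lt]; constructor <;> [linarith [hx.1]; linarith [hx.2]]
  have hUmem : ∀ x, |x - 0| < ε → |U x - a| < δ := by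
    intro x hx; have := hεP x hx; linarith
  have hUpos : ∀ x, |x - 0| < ε → 0 < U x := by
    intro x hx
    have h1 := (hδP (U x) (hUmem x hx)).1.1
    linarith
  -- assemble
  refine ⟨ε, hεpos, U, (fun x => ψ (U x)), (fun x => -(Wf (U x))), ?_, ?_, ?_, ?_, ?_, ?_, ?_, ?_⟩
  · apply contDiffOn_one_of_hasDerivAt (f' := fun x => sf (U x)) isOpen_Ioo
    · exact fun x hx => hUd' x (hstrip x hx)
    · intro x hx
      exact ((hsfc (U x) (hUmem x (hstrip x hx))).comp hUc.continuousAt).continuousWithinAt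
  · apply contDiffOn_one_of_hasDerivAt (f' := fun x => ψd (U x) * sf (U x)) isOpen_Ioo
    · intro x hx
      exact (hψdd (U x) (hUpos x (hstrip x hx))).comp x (hUd' x (hstrip x hx))
    · intro x hx
      exact (((hψdc (U x) (hUpos x (hstrip x hx))).comp hUc.continuousAt).mul
        ((hsfc (U x) (hUmem x (hstrip x hx))).comp hUc.continuousAt)).continuousWithinAt
  · apply contDiffOn_one_of_hasDerivAt (f' := fun x => -(Rf (U x))) isOpen_Ioo
    · intro x hx
      have h1 := ((hWd (U x) (hUmem x (hstrip x hx))).comp x (hUd' x (hstrip x hx))).neg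
      have h2 : Rf (U x) / sf (U x) * sf (U x) = Rf (U x) :=
        div_mul_cancel₀ _ (hsfpos (U x) (hUmem x (hstrip x hx))).ne'
      rw [h2] at h1
      exact h1
    · intro x hx
      exact (((hRfc (U x) (hUpos x (hstrip x hx))).comp hUc.continuousAt).neg).continuousWithinAt
  · intro x hx
    exact ⟨hUpos x (hstrip x hx), hψpos _⟩
  · show -(Wf (U 0)) = 0
    rw [hU0, hWfa, neg_zero]
  · show D g11 g22 g12 (U 0) (ψ (U 0)) = 0
    rw [hU0]
    have := hdda; rw [hdddef] at this; exact this
  · have h0 : (0:ℝ) ∈ Ioo (-ε) ε := by constructor <;> linarith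
    rw [(hUd' 0 (hstrip 0 h0)).deriv, hU0]
    exact (hsfpos a (by simpa using hδpos)).ne'
  · intro x hx
    have hxs := hstrip x hx
    have humem := hUmem x hxs
    have hupos := hUpos x hxs
    have hsne := (hsfpos (U x) humem).ne'
    have hc1d := hUd' x hxs
    have hc2d : HasDerivAt (fun x => ψ (U x)) (ψd (U x) * sf (U x)) x :=
      (hψdd (U x) hupos).comp x hc1d
    have hEd : HasDerivAt (fun x => -(Wf (U x))) (-(Rf (U x))) x := by
      have h1 := ((hWd (U x) humem).comp x hc1d).neg
      have h2 : Rf (U x) / sf (U x) * sf (U x) = Rf (U x) := div_mul_cancel₀ _ hsne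
      rw [h2] at h1
      exact h1
    have hDD : D g11 g22 g12 (U x) (ψ (U x)) = dd (U x) := by rw [hdddef]
    refine ⟨?_, ?_, ?_⟩
    · rw [hEd.deriv, hRfdef]
    · rw [hc1d.deriv, hDD]
      show ψ (U x) * dd (U x) * sf (U x) =
        -(z1 * (1 + g22 * ψ (U x)) - z2 * g12 * ψ (U x)) * -(Wf (U x))
      rw [hWfdef]
      show _ = -(z1 * (1 + g22 * ψ (U x)) - z2 * g12 * ψ (U x)) * -(Gf (U x) * sf (U x))
      rw [hGfdef]
      show ψ (U x) * dd (U x) * sf (U x) =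
        -(z1 * (1 + g22 * ψ (U x)) - z2 * g12 * ψ (U x)) *
          -(ψ (U x) * dd (U x) / K2 (U x) * sf (U x))
      rw [hK2def]
      have hK2x := hK2pos (U x)
      have hK2e : z1 + ψ (U x) * (z1 * g22 - z2 * g12) ≠ 0 := by linarith [hK2x]
      field_simp
      ring
    · rw [hc2d.deriv, hDD]
      show U x * dd (U x) * (ψd (U x) * sf (U x)) =
        -(z2 * (1 + g11 * U x) - z1 * g12 * U x) * -(Wf (U x))
      rw [hWfdef]
      show _ = -(z2 * (1 + g11 * U x) - z1 * g12 * U x) * -(Gf (U x) * sf (U x))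
      rw [hGfdef, hψddef, hK2def]
      have hK2x := hK2pos (U x)
      field_simp

end Aux

/-- Lemma 5 of the paper: in the concentrated regime `D(c̄1, c̄2) < 0`, there exists a
smooth nonconstant local solution of the Poisson–Boltzmann-steric stationary system
(written in multiplied form) that crosses the singular curve `{D = 0}`. -/
theorem stmt12 (z1 z2 g11 g22 g12 cbar1 cbar2 : ℝ)
    (hz2 : z2 < 0) (hz1 : 0 < z1)
    (hg11 : 0 ≤ g11) (hg22 : 0 ≤ g22) (hg12 : 0 ≤ g12)
    (hcbar1 : 0 < cbar1) (hcbar2 : 0 < cbar2)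
    (hD : D g11 g22 g12 cbar1 cbar2 < 0) :
    ∃ ε : ℝ, 0 < ε ∧
    ∃ c1 c2 E : ℝ → ℝ,
      ContDiffOn ℝ 1 c1 (Set.Ioo (-ε) ε) ∧
      ContDiffOn ℝ 1 c2 (Set.Ioo (-ε) ε) ∧
      ContDiffOn ℝ 1 E (Set.Ioo (-ε) ε) ∧
      (∀ x ∈ Set.Ioo (-ε) ε, 0 < c1 x ∧ 0 < c2 x) ∧
      E 0 = 0 ∧
      D g11 g22 g12 (c1 0) (c2 0) = 0 ∧
      deriv c1 0 ≠ 0 ∧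
      ∀ x ∈ Set.Ioo (-ε) ε,
        deriv E x = -(z1 * (c1 x - cbar1) + z2 * (c2 x - cbar2)) ∧
        c2 x * D g11 g22 g12 (c1 x) (c2 x) * deriv c1 x =
          -(z1 * (1 + g22 * c2 x) - z2 * g12 * c2 x) * E x ∧
        c1 x * D g11 g22 g12 (c1 x) (c2 x) * deriv c2 x =
          -(z2 * (1 + g11 * c1 x) - z1 * g12 * c1 x) * E x := by
  have hD' : (1 / cbar1 + g11) * (1 / cbar2 + g22) - g12 ^ 2 < 0 := hD
  obtain ⟨a, b, ha, hb, hDab, hRa, hK2b, hK3a, htrans⟩ :=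
    exists_good_point z1 z2 g11 g22 g12 cbar1 cbar2 hz2 hz1 hg11 hg22 hg12 hcbar1 hcbar2 hD'
  have hk : 0 ≤ z1*g22 - z2*g12 := by
    nlinarith [mul_nonneg hz1.le hg22, mul_nonneg hg12 (by linarith : (0:ℝ) ≤ -z2)]
  obtain ⟨ψ, hψa, hψpos, hK2pos, hψc, hψdd⟩ :=
    exists_psi z1 z2 g11 g22 g12 a b hz1 ha hb hk
  have hDab' : (1/a + g11) * (1/b + g22) = g12^2 := by
    have := hDab; linarith [hDab]
  exact main_analysis z1 z2 g11 g22 g12 cbar1 cbar2 a b ψ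
    (fun u => ψ u * (z2*(1+g11*u) - z1*g12*u) / (u * (z1 + (z1*g22 - z2*g12) * ψ u)))
    hz2 hz1 hg11 hg22 hg12 ha hb hψa hψpos hK2pos hψc hψdd rfl hDab' hRa htrans
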